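/- Let M = (E, G) be a matroid of dimension n+1, let G₀ be a hyperplane of G, and suppose M is the semidoubling of M₀ = (E ∩ G₀, G₀) with respect to a hyperplane H₀ of G₀. Then χ(M) = χ(M|H₀) + 1. -/

import Mathlib

/-- A simple binary matroid `M = (E, G)`: a dimension `n` together with a ground set `E`
of nonzero vectors of `𝔽₂ⁿ` (the points of `G = 𝔽₂ⁿ \ {0}`). -/
structure BinMatroid where
  dim : ℕ
  E : Set (Fin dim → ZMod 2)
  zero_not_mem : 0 ∉ E

namespace BinMatroid

/-- `M.HasIR N` : `M` contains `N` as an induced restriction, i.e. there is an injective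
linear map `φ` with `φ(E(N)) = E(M) ∩ (φ(G') \ {0})`. -/
def HasIR (M N : BinMatroid) : Prop :=
  ∃ φ : (Fin N.dim → ZMod 2) →ₗ[ZMod 2] (Fin M.dim → ZMod 2),
    Function.Injective φ ∧ φ '' N.E = M.E ∩ (Set.range φ \ {0})

/-- Isomorphism of binary matroids: a bijective induced embedding. -/
def Iso (M N : BinMatroid) : Prop :=
  ∃ φ : (Fin N.dim → ZMod 2) →ₗ[ZMod 2] (Fin M.dim → ZMod 2),
    Function.Bijective φ ∧ φ '' N.E = M.E ∩ (Set.range φ \ {0})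

/-- The critical number of the induced restriction of the ground set `E` to the flat of
the subspace `F`: the least `k` such that some flat of `F` of dimension `dim F - k`
is disjoint from `E`. -/
noncomputable def critNumRes {n : ℕ} (E : Set (Fin n → ZMod 2))
    (F : Submodule (ZMod 2) (Fin n → ZMod 2)) : ℕ :=
  sInf {k : ℕ | ∃ W : Submodule (ZMod 2) (Fin n → ZMod 2), W ≤ F ∧
    Module.finrank (ZMod 2) W = Module.finrank (ZMod 2) F - k ∧
    Disjoint ((W : Set (Fin n → ZMod 2)) \ {0}) E}

/-- The critical number `χ(M)`: the least `k ≥ 0` such that some flat of dimension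
`n - k` is disjoint from `E`. -/
noncomputable def critNum (M : BinMatroid) : ℕ :=
  sInf {k : ℕ | ∃ W : Submodule (ZMod 2) (Fin M.dim → ZMod 2),
    Module.finrank (ZMod 2) W = M.dim - k ∧
    Disjoint ((W : Set (Fin M.dim → ZMod 2)) \ {0}) M.E}

/-- `M ∈ ℰ_k` : every induced restriction of `M` to a flat of dimension at least `k`
has even size. -/
def MemE (k : ℕ) (M : BinMatroid) : Prop :=
  ∀ W : Submodule (ZMod 2) (Fin M.dim → ZMod 2),
    k ≤ Module.finrank (ZMod 2) W →
    Even (M.E ∩ ((W : Set (Fin M.dim → ZMod 2)) \ {0})).ncard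

/-- `M` is full-rank: `E` spans `𝔽₂ⁿ`. -/
def FullRank (M : BinMatroid) : Prop :=
  Submodule.span (ZMod 2) M.E = ⊤

/-- `M` is (isomorphic to) the doubling of `M₀`: `M₀` is identified, via an injective
linear map `φ`, with the restriction of `M` to a hyperplane `H = range φ`, there is
`w ∈ G − (E ∪ H)`, and `E = (E ∩ H) ∪ (w + (E ∩ H))`. -/
def IsDoublingOf (M M₀ : BinMatroid) : Prop :=
  M.dim = M₀.dim + 1 ∧
  ∃ φ : (Fin M₀.dim → ZMod 2) →ₗ[ZMod 2] (Fin M.dim → ZMod 2),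
    Function.Injective φ ∧
    ∃ w : Fin M.dim → ZMod 2, w ≠ 0 ∧ w ∉ Set.range φ ∧ w ∉ M.E ∧
      M.E = φ '' M₀.E ∪ (fun x => w + x) '' (φ '' M₀.E)

/-- `M` arises from `M₀` by a (possibly empty) sequence of doublings. -/
def ArisesByDoublings (M M₀ : BinMatroid) : Prop :=
  ∃ M' : BinMatroid,
    Relation.ReflTransGen (fun A B => IsDoublingOf B A) M₀ M' ∧ M.Iso M'

/-- `M` is (a copy of) `AG°(t−1, 2)`, the matroid `((G − H) ∪ {x}, G)` with `H` a
hyperplane of `G` and `x ∈ H`, where `t = M.dim`. -/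
def IsAGo (M : BinMatroid) : Prop :=
  ∃ H : Submodule (ZMod 2) (Fin M.dim → ZMod 2),
    Module.finrank (ZMod 2) H + 1 = M.dim ∧
    ∃ x ∈ (H : Set (Fin M.dim → ZMod 2)) \ {0},
      M.E = ({v | v ≠ 0} \ (H : Set (Fin M.dim → ZMod 2))) ∪ {x}

/-- `M` is a Bose–Burton geometry of order `k`: `E = G − F` for a flat `F` of
dimension `n − k`. -/
def IsBoseBurton (M : BinMatroid) (k : ℕ) : Prop :=
  k ≤ M.dim ∧ ∃ W : Submodule (ZMod 2) (Fin M.dim → ZMod 2),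
    Module.finrank (ZMod 2) W = M.dim - k ∧
    M.E = {v | v ≠ 0} \ (W : Set (Fin M.dim → ZMod 2))

/-- The ground set `E` (of a matroid of the ambient dimension `n`) is the semidoubling
of its restriction to the hyperplane `H₁` with respect to the hyperplane `H₀` of `H₁`:
there is `w ∈ G − (E ∪ H₁)` with `|{x, x+w} ∩ E| ∈ {0, 2}` for every `x ∈ H₀` and
`|{x, x+w} ∩ E| = 1` for every `x ∈ H₁ − H₀`. -/
def IsSemidoublingWrt {n : ℕ} (E : Set (Fin n → ZMod 2))
    (H₁ H₀ : Submodule (ZMod 2) (Fin n → ZMod 2)) : Prop :=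
  H₀ ≤ H₁ ∧ Module.finrank (ZMod 2) H₀ + 1 = Module.finrank (ZMod 2) H₁ ∧
  ∃ w : Fin n → ZMod 2, w ≠ 0 ∧ w ∉ H₁ ∧ w ∉ E ∧
    (∀ x ∈ (H₀ : Set (Fin n → ZMod 2)) \ {0},
      (({x, x + w} : Set (Fin n → ZMod 2)) ∩ E).ncard = 0 ∨
      (({x, x + w} : Set (Fin n → ZMod 2)) ∩ E).ncard = 2) ∧
    (∀ x ∈ (H₁ : Set (Fin n → ZMod 2)) \ (H₀ : Set (Fin n → ZMod 2)),
      (({x, x + w} : Set (Fin n → ZMod 2)) ∩ E).ncard = 1)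

/-- The ground set `E` is a semidoubling of its restriction to the hyperplane `H₁`
(with respect to some hyperplane `H₀` of `H₁`). -/
def IsSemidoublingOfRes {n : ℕ} (E : Set (Fin n → ZMod 2))
    (H₁ : Submodule (ZMod 2) (Fin n → ZMod 2)) : Prop :=
  ∃ H₀ : Submodule (ZMod 2) (Fin n → ZMod 2), IsSemidoublingWrt E H₁ H₀

/-- `M` is (isomorphic to) a semidoubling of `M₀`: `M₀` is identified, via an injective
linear map `φ`, with the restriction of `M` to the hyperplane `range φ`, and `M` is a
semidoubling of that restriction. -/
def IsSemidoublingOf (M M₀ : BinMatroid) : Prop :=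
  M.dim = M₀.dim + 1 ∧
  ∃ φ : (Fin M₀.dim → ZMod 2) →ₗ[ZMod 2] (Fin M.dim → ZMod 2),
    Function.Injective φ ∧
    φ '' M₀.E = M.E ∩ (Set.range φ \ {0}) ∧
    IsSemidoublingOfRes M.E (LinearMap.range φ)

/-- `M` arises from `M₀` by a (possibly empty) sequence of semidoublings. -/
def ArisesBySemidoublings (M M₀ : BinMatroid) : Prop :=
  ∃ M' : BinMatroid,
    Relation.ReflTransGen (fun A B => IsSemidoublingOf B A) M₀ M' ∧ M.Iso M'

end BinMatroid

/-- A triangle of `G`: a set `{x, y, z}` of three distinct nonzero vectors with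
`x + y + z = 0`. -/
def IsTriangle {n : ℕ} (T : Set (Fin n → ZMod 2)) : Prop :=
  ∃ x y z : Fin n → ZMod 2, x ≠ 0 ∧ y ≠ 0 ∧ z ≠ 0 ∧
    x ≠ y ∧ x ≠ z ∧ y ≠ z ∧ x + y + z = 0 ∧ T = {x, y, z}

/-- `I₃`, the claw: the 3-dimensional matroid whose ground set is the three standard
basis vectors of `𝔽₂³`. -/
def I3 : BinMatroid where
  dim := 3
  E := Set.range fun i : Fin 3 => (Pi.single i 1 : Fin 3 → ZMod 2)
  zero_not_mem := by
    rintro ⟨i, hi⟩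
    have := congrFun hi i
    simp [Pi.single_eq_same] at this

/-- `F₇`, the Fano plane: the 3-dimensional matroid whose ground set is all of
`𝔽₂³ \ {0}`. -/
def F7 : BinMatroid where
  dim := 3
  E := {v | v ≠ 0}
  zero_not_mem := by simp

/-- `K₅`: the 4-dimensional matroid whose ground set is the set of vectors of Hamming
weight 1 or 2 in `𝔽₂⁴`. -/
def K5 : BinMatroid where
  dim := 4
  E := {v | hammingNorm v = 1 ∨ hammingNorm v = 2}
  zero_not_mem := by
    intro h
    simp only [Set.mem_setOf_eq, hammingNorm_zero] at h
    omega


private lemma zmod2_em : ∀ a : ZMod 2, a = 0 ∨ a = 1 := by decide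

private lemma pi_add_self {n : ℕ} (v : Fin n → ZMod 2) : v + v = 0 := by
  rw [← two_smul (ZMod 2) v, (by decide : (2 : ZMod 2) = 0), zero_smul]

private lemma semidouble_shrink {n : ℕ} {E : Set (Fin n → ZMod 2)}
    {G₀ H₀ : Submodule (ZMod 2) (Fin n → ZMod 2)}
    (hle : H₀ ≤ G₀)
    (hrk : Module.finrank (ZMod 2) H₀ + 1 = Module.finrank (ZMod 2) G₀)
    (hG : Module.finrank (ZMod 2) G₀ + 1 = n)
    {w : Fin n → ZMod 2} (hw0 : w ≠ 0) (hwG : w ∉ G₀)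
    (hiff : ∀ x ∈ H₀, x ≠ (0 : Fin n → ZMod 2) → (x ∈ E ↔ x + w ∈ E))
    (hone : ∀ x ∈ G₀, x ∉ H₀ → (x ∈ E ∨ x + w ∈ E))
    (W : Submodule (ZMod 2) (Fin n → ZMod 2))
    (hdisj : ∀ x ∈ W, x ≠ (0 : Fin n → ZMod 2) → x ∉ E) :
    ∃ W' : Submodule (ZMod 2) (Fin n → ZMod 2), W' ≤ H₀ ∧
      Module.finrank (ZMod 2) W ≤ Module.finrank (ZMod 2) W' + 1 ∧
      ∀ x ∈ W', x ≠ (0 : Fin n → ZMod 2) → x ∉ E := by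
  classical
  set S := Submodule.span (ZMod 2) {w} with hS
  have hmemS : ∀ x, x ∈ S → x = 0 ∨ w = x := by
    intro x hx
    rcases Submodule.mem_span_singleton.mp hx with ⟨a, rfl⟩
    rcases zmod2_em a with h | h <;> subst h <;> simp
  have hwS : w ∈ S := Submodule.mem_span_singleton_self w
  have hwH : w ∉ H₀ := fun hw => hwG (hle hw)
  have hfinS : Module.finrank (ZMod 2) S = 1 := finrank_span_singleton hw0
  have hn : Module.finrank (ZMod 2) (Fin n → ZMod 2) = n := by simp
  refine ⟨(W ⊔ S) ⊓ H₀, inf_le_right, ?_, ?_⟩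
  · -- rank bound
    have key := Submodule.finrank_sup_add_finrank_inf_eq (W ⊔ S) H₀
    have hmonoW : Module.finrank (ZMod 2) W ≤ Module.finrank (ZMod 2) ↥(W ⊔ S) :=
      Submodule.finrank_mono le_sup_left
    by_cases hwW : w ∈ W
    · -- show W ≤ H₀ ⊔ S
      have hWle : W ≤ H₀ ⊔ S := by
        intro y hy
        by_contra hyK
        have htop : G₀ ⊔ S = ⊤ := by
          apply Submodule.eq_top_of_finrank_eq
          have hinf : G₀ ⊓ S = ⊥ := by
            rw [eq_bot_iff]
            rintro x ⟨hxG, hxS⟩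
            rcases hmemS x hxS with rfl | rfl
            · simp
            · exact absurd hxG hwG
          have h2 := Submodule.finrank_sup_add_finrank_inf_eq G₀ S
          rw [hinf] at h2
          simp only [finrank_bot, add_zero, hfinS] at h2
          rw [hn]; omega
        have hy2 : y ∈ G₀ ⊔ S := htop ▸ Submodule.mem_top
        rcases Submodule.mem_sup.mp hy2 with ⟨g, hg, s, hs, rfl⟩
        have hgH : g ∉ H₀ := fun hgH => hyK (Submodule.add_mem_sup hgH hs)
        have hg0 : g ≠ 0 := fun h => hgH (h ▸ H₀.zero_mem)
        have hgw0 : g + w ≠ 0 := by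
          intro hgw
          have h3 : g + w = g + g := by rw [hgw, pi_add_self]
          exact hwG ((add_left_cancel h3) ▸ hg)
        rcases hmemS s hs with rfl | rfl
        · rw [add_zero] at hy hyK
          rcases hone g hg hgH with hE | hE
          · exact hdisj g hy hg0 hE
          · exact hdisj _ (W.add_mem hy hwW) hgw0 hE
        · rcases hone g hg hgH with hE | hE
          · have hgW : g ∈ W := by
              have h4 := W.add_mem hy hwW
              rwa [add_assoc, pi_add_self, add_zero] at h4
            exact hdisj g hgW hg0 hE
          · exact hdisj _ hy hgw0 hE
      have hle2 : (W ⊔ S) ⊔ H₀ ≤ H₀ ⊔ S := sup_le (sup_le hWle le_sup_right) le_sup_left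
      have h5 : Module.finrank (ZMod 2) ↥((W ⊔ S) ⊔ H₀) ≤
          Module.finrank (ZMod 2) ↥(H₀ ⊔ S) := Submodule.finrank_mono hle2
      have h6 := Submodule.finrank_sup_add_finrank_inf_eq H₀ S
      rw [hfinS] at h6
      omega
    · have hinfWS : W ⊓ S = ⊥ := by
        rw [eq_bot_iff]
        rintro x ⟨hxW, hxS⟩
        rcases hmemS x hxS with rfl | rfl
        · simp
        · exact absurd hxW hwW
      have h7 := Submodule.finrank_sup_add_finrank_inf_eq W S
      rw [hinfWS, hfinS] at h7
      simp only [finrank_bot, add_zero] at h7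
      have h8 : Module.finrank (ZMod 2) ↥((W ⊔ S) ⊔ H₀) ≤ n := by
        have h8' := Submodule.finrank_le ((W ⊔ S) ⊔ H₀)
        rwa [hn] at h8'
      omega
  · -- disjointness
    rintro x ⟨hxWS, hxH⟩ hx0
    rcases Submodule.mem_sup.mp hxWS with ⟨u, hu, s, hs, rfl⟩
    rcases hmemS s hs with rfl | rfl
    · rw [add_zero] at hxH hx0 ⊢
      exact hdisj u hu hx0
    · by_cases hu0 : u = 0
      · subst hu0
        rw [zero_add] at hxH
        exact absurd hxH hwH
      · intro hxE
        have h1 : (u + w) + w = u := by rw [add_assoc, pi_add_self, add_zero]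
        have h2 := (hiff _ hxH hx0).mp hxE
        rw [h1] at h2
        exact hdisj u hu hu0 h2

/-- If `M = (E, G)`, `G₀` is a hyperplane of `G`, and `M` is the
semidoubling of `M₀ = (E ∩ G₀, G₀)` with respect to a hyperplane `H₀` of `G₀`, then
`χ(M) = χ(M|H₀) + 1`. -/
theorem stmt12 (M : BinMatroid)
    (G₀ H₀ : Submodule (ZMod 2) (Fin M.dim → ZMod 2))
    (hG₀ : Module.finrank (ZMod 2) G₀ + 1 = M.dim)
    (h : BinMatroid.IsSemidoublingWrt M.E G₀ H₀) :
    M.critNum = BinMatroid.critNumRes M.E H₀ + 1 := by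
  classical
  obtain ⟨hle, hrk, w, hw0, hwG, hwE, hpar0, hpar1⟩ := h
  have hfinH : Module.finrank (ZMod 2) H₀ + 2 = M.dim := by omega
  have hwH : w ∉ H₀ := fun hw => hwG (hle hw)
  -- parity facts
  have hiff : ∀ x ∈ H₀, x ≠ (0 : Fin M.dim → ZMod 2) → (x ∈ M.E ↔ x + w ∈ M.E) := by
    intro x hx hx0
    have hne : x ≠ x + w := fun hh => hw0 (left_eq_add.mp hh)
    have hfin : ({x, x + w} : Set (Fin M.dim → ZMod 2)).Finite :=
      (Set.finite_singleton _).insert _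
    rcases hpar0 x ⟨hx, hx0⟩ with hc | hc
    · have hemp : ({x, x + w} : Set (Fin M.dim → ZMod 2)) ∩ M.E = ∅ :=
        (Set.ncard_eq_zero (hfin.inter_of_left _)).mp hc
      have hx1 : x ∉ M.E := fun hE =>
        Set.eq_empty_iff_forall_notMem.mp hemp x ⟨by simp, hE⟩
      have hx2 : x + w ∉ M.E := fun hE =>
        Set.eq_empty_iff_forall_notMem.mp hemp (x + w) ⟨by simp, hE⟩
      exact iff_of_false hx1 hx2
    · have heq : ({x, x + w} : Set (Fin M.dim → ZMod 2)) ∩ M.E = {x, x + w} := by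
        apply Set.eq_of_subset_of_ncard_le Set.inter_subset_left _ hfin
        rw [hc, Set.ncard_pair hne]
      have hx1 : x ∈ M.E := by
        have hmem : x ∈ ({x, x + w} : Set (Fin M.dim → ZMod 2)) ∩ M.E := by
          rw [heq]; simp
        exact hmem.2
      have hx2 : x + w ∈ M.E := by
        have hmem : x + w ∈ ({x, x + w} : Set (Fin M.dim → ZMod 2)) ∩ M.E := by
          rw [heq]; simp
        exact hmem.2
      exact iff_of_true hx1 hx2
  have hone : ∀ x ∈ G₀, x ∉ H₀ → (x ∈ M.E ∨ x + w ∈ M.E) := by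
    intro x hx hxH
    have hc := hpar1 x ⟨hx, hxH⟩
    have hne : (({x, x + w} : Set (Fin M.dim → ZMod 2)) ∩ M.E).Nonempty := by
      apply Set.nonempty_of_ncard_ne_zero; omega
    rcases hne with ⟨y, hy1, hy2⟩
    rcases hy1 with rfl | hy1
    · exact Or.inl hy2
    · rw [Set.mem_singleton_iff] at hy1
      subst hy1
      exact Or.inr hy2
  -- disjointness translation
  have hdisj_iff : ∀ W : Submodule (ZMod 2) (Fin M.dim → ZMod 2),
      Disjoint ((W : Set (Fin M.dim → ZMod 2)) \ {0}) M.E ↔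
        ∀ x ∈ W, x ≠ (0 : Fin M.dim → ZMod 2) → x ∉ M.E := by
    intro W
    constructor
    · intro hd x hx hx0 hxE
      exact Set.disjoint_left.mp hd ⟨hx, hx0⟩ hxE
    · intro hf
      rw [Set.disjoint_left]
      rintro x ⟨hx, hx0⟩
      exact hf x hx hx0
  set m := Module.finrank (ZMod 2) H₀ with hm
  set Tset : Set ℕ := {k : ℕ | ∃ W : Submodule (ZMod 2) (Fin M.dim → ZMod 2), W ≤ H₀ ∧
    Module.finrank (ZMod 2) W = Module.finrank (ZMod 2) H₀ - k ∧
    Disjoint ((W : Set (Fin M.dim → ZMod 2)) \ {0}) M.E} with hTset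
  set Sset : Set ℕ := {k : ℕ | ∃ W : Submodule (ZMod 2) (Fin M.dim → ZMod 2),
    Module.finrank (ZMod 2) W = M.dim - k ∧
    Disjoint ((W : Set (Fin M.dim → ZMod 2)) \ {0}) M.E} with hSset
  have hgoalT : BinMatroid.critNumRes M.E H₀ = sInf Tset := rfl
  have hgoalS : M.critNum = sInf Sset := rfl
  have hmT : m ∈ Tset := by
    refine ⟨⊥, bot_le, by simp [hm], ?_⟩
    rw [hdisj_iff]
    intro x hx hx0
    exact absurd ((Submodule.mem_bot _).mp hx) hx0
  have hTne : Tset.Nonempty := ⟨m, hmT⟩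
  set c₀ := sInf Tset with hc₀def
  have hc₀le : c₀ ≤ m := Nat.sInf_le hmT
  obtain ⟨W, hWle, hWrk, hWdisj⟩ := Nat.sInf_mem hTne
  rw [hdisj_iff] at hWdisj
  -- upper bound: c₀ + 1 ∈ Sset
  have hwW : w ∉ W := fun hw => hwH (hWle hw)
  have hup : (c₀ + 1) ∈ Sset := by
    refine ⟨W ⊔ Submodule.span (ZMod 2) {w}, ?_, ?_⟩
    · have hinf : W ⊓ Submodule.span (ZMod 2) {w} = ⊥ := by
        rw [eq_bot_iff]
        rintro x ⟨hxW, hxS⟩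
        rcases Submodule.mem_span_singleton.mp hxS with ⟨a, rfl⟩
        rcases zmod2_em a with ha | ha <;> subst ha
        · simp
        · rw [one_smul] at hxW; exact absurd hxW hwW
      have h7 := Submodule.finrank_sup_add_finrank_inf_eq W
        (Submodule.span (ZMod 2) {w})
      rw [hinf, finrank_span_singleton hw0] at h7
      simp only [finrank_bot, add_zero] at h7
      omega
    · rw [hdisj_iff]
      intro x hx hx0 hxE
      rcases Submodule.mem_sup.mp hx with ⟨u, hu, s, hs, rfl⟩
      rcases Submodule.mem_span_singleton.mp hs with ⟨a, rfl⟩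
      rcases zmod2_em a with ha | ha <;> subst ha
      · rw [zero_smul, add_zero] at hx0 hxE
        exact hWdisj u hu hx0 hxE
      · rw [one_smul] at hx0 hxE
        by_cases hu0 : u = 0
        · subst hu0; rw [zero_add] at hxE; exact hwE hxE
        · have huH : u ∈ H₀ := hWle hu
          have huE : u ∉ M.E := hWdisj u hu hu0
          exact huE ((hiff u huH hu0).mpr hxE)
  have hSne : Sset.Nonempty := ⟨c₀ + 1, hup⟩
  have hSle : sInf Sset ≤ c₀ + 1 := Nat.sInf_le hup
  -- lower bound
  obtain ⟨V, hVrk, hVdisj⟩ := Nat.sInf_mem hSne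
  rw [hdisj_iff] at hVdisj
  obtain ⟨W', hW'le, hW'rk, hW'disj⟩ :=
    semidouble_shrink hle hrk hG₀ hw0 hwG hiff hone V hVdisj
  have hW'H : Module.finrank (ZMod 2) W' ≤ m := Submodule.finrank_mono hW'le
  have hmemT : (m - Module.finrank (ZMod 2) W') ∈ Tset := by
    refine ⟨W', hW'le, by omega, ?_⟩
    rw [hdisj_iff]
    exact hW'disj
  have hc₀le2 : c₀ ≤ m - Module.finrank (ZMod 2) W' := Nat.sInf_le hmemT
  rw [hgoalT, hgoalS]
  omega
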